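/- Let H be a complex Hilbert space and T a self-adjoint operator bounded below. Suppose φ₀, …, φ_N ∈ Dom(T) satisfy ⟨φ_i, φ_j⟩ = δ_{ij} and ‖Tφ_j - μ_j φ_j‖ ≤ ε for real numbers μ₀ ≤ … ≤ μ_N and ε ≥ 0, and suppose Spec(T) ∩ (-∞, μ_N + ε] consists of finitely many eigenvalues with finite multiplicities λ₀ ≤ λ₁ ≤ …. If moreover the μ_j are separated: μ_{j+1} - μ_j > 2ε for all j, then λ_j ≤ μ_j + ε for each 0 ≤ j ≤ N. -/

import Mathlib

open Complex

lemma aux_exists_spectrum_near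
    {H : Type*} [NormedAddCommGroup H] [InnerProductSpace ℂ H] [CompleteSpace H]
    (T : H →L[ℂ] H) (hT : IsSelfAdjoint T) {φ : H} (hφ : ‖φ‖ = 1)
    (μ ε : ℝ) (hε : 0 ≤ ε) (hq : ‖T φ - (μ : ℂ) • φ‖ ≤ ε) :
    ∃ z ∈ spectrum ℂ T, dist z (μ : ℂ) ≤ ε := by
  by_contra hcon
  push_neg at hcon
  haveI : Nontrivial H := by
    refine nontrivial_of_ne φ 0 (fun h => ?_)
    rw [h, norm_zero] at hφ; norm_num at hφ
  have hne : (spectrum ℂ T).Nonempty := spectrum.nonempty T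
  obtain ⟨z₀, hz₀, hz₀d⟩ := (spectrum.isCompact T).exists_infDist_eq_dist hne (μ : ℂ)
  set d : ℝ := Metric.infDist (μ : ℂ) (spectrum ℂ T) with hd
  have hεd : ε < d := by
    rw [hz₀d, dist_comm]; exact hcon z₀ hz₀
  have hdpos : 0 < d := lt_of_le_of_lt hε hεd
  have hμnot : (μ : ℂ) ∉ spectrum ℂ T := fun h => absurd (hcon _ h) (by simp [dist_self]; exact hε)
  set B : H →L[ℂ] H := algebraMap ℂ (H →L[ℂ] H) (μ : ℂ) - T with hB
  have hBunit : IsUnit B := spectrum.notMem_iff.mp hμnot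
  obtain ⟨u, hu⟩ := hBunit
  have hBsa : IsSelfAdjoint B := by
    have h1 : IsSelfAdjoint (algebraMap ℂ (H →L[ℂ] H) (μ : ℂ)) := by
      rw [IsSelfAdjoint, ← algebraMap_star_comm]
      norm_num [Complex.star_def, Complex.conj_ofReal]
    exact h1.sub hT
  set S : H →L[ℂ] H := (↑u⁻¹ : H →L[ℂ] H) with hS
  have hSsa : IsSelfAdjoint S := by
    rw [hS, ← Ring.inverse_unit u, hu, IsSelfAdjoint, ← Ring.inverse_star, hBsa.star_eq]
  -- norm bound on S
  have hspecS : ∀ z ∈ spectrum ℂ S, ‖z‖ ≤ d⁻¹ := by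
    intro z hz
    rw [hS, ← spectrum.map_inv u] at hz
    rw [Set.mem_inv] at hz
    rw [hu, hB, ← spectrum.singleton_sub_eq] at hz
    obtain ⟨m, hm, t, ht, hmt⟩ := hz
    rw [Set.mem_singleton_iff] at hm
    subst hm
    have h1 : ‖z⁻¹‖ = dist (μ : ℂ) t := by rw [← hmt]; exact (dist_eq_norm _ _).symm
    have h2 : d ≤ ‖z⁻¹‖ := by rw [h1]; exact Metric.infDist_le_dist_of_mem ht
    have hz0 : z ≠ 0 := by
      intro h; rw [h] at h2; simp at h2; linarith
    calc ‖z‖ = ‖z⁻¹‖⁻¹ := by rw [norm_inv, inv_inv]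
    _ ≤ d⁻¹ := by exact inv_anti₀ hdpos h2
  have hSnorm : ‖S‖ ≤ d⁻¹ := by
    have hrad : spectralRadius ℂ S = ‖S‖₊ := hSsa.spectralRadius_eq_nnnorm
    have hle : spectralRadius ℂ S ≤ ENNReal.ofReal d⁻¹ := by
      rw [spectralRadius]
      refine iSup₂_le fun z hz => ?_
      have := hspecS z hz
      rw [← ENNReal.ofReal_coe_nnreal]
      exact ENNReal.ofReal_le_ofReal (by simpa using this)
    rw [hrad] at hle
    have := ENNReal.toReal_mono (by simp) hle
    simpa [ENNReal.toReal_ofReal (le_of_lt (inv_pos.mpr hdpos))] using this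
  -- final contradiction
  have hfix : S (B φ) = φ := by
    have : (↑u⁻¹ * ↑u : H →L[ℂ] H) = 1 := u.inv_mul
    calc S (B φ) = (↑u⁻¹ * ↑u : H →L[ℂ] H) φ := by rw [hu]; rfl
    _ = φ := by rw [this]; rfl
  have hBφ : ‖B φ‖ ≤ ε := by
    have : B φ = -(T φ - (μ : ℂ) • φ) := by
      simp [hB, Algebra.algebraMap_eq_smul_one, ContinuousLinearMap.sub_apply,
        ContinuousLinearMap.smul_apply]
    rw [this, norm_neg]; exact hq
  have : (1 : ℝ) ≤ d⁻¹ * ε := by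
    calc (1:ℝ) = ‖φ‖ := hφ.symm
    _ = ‖S (B φ)‖ := by rw [hfix]
    _ ≤ ‖S‖ * ‖B φ‖ := S.le_opNorm _
    _ ≤ d⁻¹ * ε := by
        exact mul_le_mul hSnorm hBφ (norm_nonneg _) (le_of_lt (inv_pos.mpr hdpos))
  have : d⁻¹ * ε < 1 := by
    have := mul_lt_mul_of_pos_left hεd (inv_pos.mpr hdpos)
    rwa [inv_mul_cancel₀ (ne_of_gt hdpos)] at this
  linarith

/-- abstract quasimode upper bound for eigenvalues: let `T` be
a self-adjoint operator (bounded below) on a complex Hilbert space, and let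
`φ₀, …, φ_N` be orthonormal vectors with `‖Tφⱼ − μⱼφⱼ‖ ≤ ε`, where
`μ₀ ≤ … ≤ μ_N` and consecutive `μⱼ` are separated by more than `2ε`. Assume
the spectrum of `T` in `(−∞, μ_N + ε]` consists of finitely many eigenvalues.
Then the `j`-th min-max value `λⱼ` of `T` (which under the finiteness
assumption is its `j`-th eigenvalue counted with multiplicity) satisfies
`λⱼ ≤ μⱼ + ε` for all `0 ≤ j ≤ N`. -/
theorem quasimodes_give_eigenvalue_upper_bounds
    {H : Type*} [NormedAddCommGroup H] [InnerProductSpace ℂ H] [CompleteSpace H]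
    (T : H →L[ℂ] H) (hT : IsSelfAdjoint T)
    (hbelow : ∃ c : ℝ, ∀ u : H, c * ‖u‖ ^ 2 ≤ (inner ℂ (T u) u : ℂ).re)
    (N : ℕ) (φ : Fin (N + 1) → H) (μ : Fin (N + 1) → ℝ) (ε : ℝ) (hε : 0 ≤ ε)
    (horth : ∀ i j : Fin (N + 1),
      (inner ℂ (φ i) (φ j) : ℂ) = if i = j then 1 else 0)
    (hquasi : ∀ j : Fin (N + 1), ‖T (φ j) - (μ j : ℂ) • φ j‖ ≤ ε)
    (hmono : Monotone μ)
    (hsep : ∀ j : Fin N, 2 * ε < μ j.succ - μ j.castSucc)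
    (hfin : (spectrum ℂ T ∩ {z : ℂ | z.re ≤ μ (Fin.last N) + ε}).Finite)
    (heigen : ∀ z ∈ spectrum ℂ T ∩ {z : ℂ | z.re ≤ μ (Fin.last N) + ε},
      Module.End.HasEigenvalue (T : H →ₗ[ℂ] H) z) :
    ∀ j : Fin (N + 1),
      sInf {m : ℝ | ∃ V : Submodule ℂ H, Module.finrank ℂ V = (j : ℕ) + 1
            ∧ ∀ u ∈ V, (inner ℂ (T u) u : ℂ).re ≤ m * ‖u‖ ^ 2}
        ≤ μ j + ε := by
  intro j
  -- norms of quasimodes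
  have hφnorm : ∀ i, ‖φ i‖ = 1 := by
    intro i
    have h := horth i i
    simp only [if_pos rfl] at h
    have h2 : (‖φ i‖ : ℝ) ^ 2 = 1 := by
      have := inner_self_eq_norm_sq (𝕜 := ℂ) (φ i)
      rw [h] at this; simpa using this.symm
    nlinarith [norm_nonneg (φ i)]
  -- step 1: real eigenvalues near each μ i
  have key : ∀ i : Fin (N + 1), ∃ lam : ℝ, |lam - μ i| ≤ ε ∧
      Module.End.HasEigenvalue (T : H →ₗ[ℂ] H) (lam : ℂ) := by
    intro i
    obtain ⟨z, hz, hzd⟩ := aux_exists_spectrum_near T hT (hφnorm i) (μ i) ε hε (hquasi i)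
    have hzre : z = (z.re : ℂ) := hT.mem_spectrum_eq_re hz
    refine ⟨z.re, ?_, ?_⟩
    · have h1 : |z.re - μ i| ≤ ‖z - (μ i : ℂ)‖ := by
        have := Complex.abs_re_le_norm (z - (μ i : ℂ))
        simpa using this
      have h2 : dist z ((μ i : ℂ)) = ‖z - (μ i : ℂ)‖ := Complex.dist_eq z _
      rw [h2] at hzd; linarith
    · have hle : z.re ≤ μ (Fin.last N) + ε := by
        have h1 : |z.re - μ i| ≤ ε := by
          have h1 : |z.re - μ i| ≤ ‖z - (μ i : ℂ)‖ := by
            simpa using Complex.abs_re_le_norm (z - (μ i : ℂ))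
          have h2 : dist z ((μ i : ℂ)) = ‖z - (μ i : ℂ)‖ := Complex.dist_eq z _
          rw [h2] at hzd; linarith
        have := abs_le.mp h1
        have hμle : μ i ≤ μ (Fin.last N) := hmono (Fin.le_last i)
        linarith [this.2]
      have := heigen z ⟨hz, hle⟩
      rwa [hzre] at this
  choose lam hlam hEig using key
  -- eigenvectors
  have hev : ∀ i, ∃ v : H, ‖v‖ = 1 ∧ T v = (lam i : ℂ) • v := by
    intro i
    obtain ⟨w, hw1, hw2⟩ := (hEig i).exists_hasEigenvector
    rw [Module.End.mem_eigenspace_iff] at hw1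
    refine ⟨(‖w‖ : ℂ)⁻¹ • w, ?_, ?_⟩
    · rw [norm_smul]
      simp [norm_norm, hw2, norm_ne_zero_iff.mpr hw2]
    · rw [map_smul]
      have : T w = (lam i : ℂ) • w := hw1
      rw [this, smul_comm]
  choose v hv1 hv2 using hev
  -- eigenvalue separation
  have hltlam : ∀ i k : Fin (N + 1), i < k → lam i < lam k := by
    intro i k hik
    have hik' : (i : ℕ) < (k : ℕ) := hik
    have hiN : (i : ℕ) < N := lt_of_lt_of_le hik' (Nat.lt_succ_iff.mp k.isLt)
    set i' : Fin N := ⟨i, hiN⟩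
    have hcs : i'.castSucc = i := by ext; rfl
    have hsucc : i'.succ ≤ k := by
      show (i : ℕ) + 1 ≤ (k : ℕ); omega
    have h1 : 2 * ε < μ i'.succ - μ i'.castSucc := hsep i'
    have h2 : μ i'.succ ≤ μ k := hmono hsucc
    rw [hcs] at h1
    have hai := abs_le.mp (hlam i)
    have hak := abs_le.mp (hlam k)
    linarith [hai.2, hak.1]
  -- orthogonality of eigenvectors
  have hovv : ∀ i k : Fin (N + 1), i ≠ k → (inner ℂ (v i) (v k) : ℂ) = 0 := by
    intro i k hik
    have hne : (lam i : ℂ) ≠ (lam k : ℂ) := by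
      rcases lt_or_gt_of_ne hik with h | h
      · exact_mod_cast ne_of_lt (by exact_mod_cast hltlam i k h)
      · exact_mod_cast ne_of_gt (by exact_mod_cast hltlam k i h)
    have hsym := hT.isSymmetric
    have h1 : (inner ℂ (T (v i)) (v k) : ℂ) = inner ℂ (v i) (T (v k)) := hsym (v i) (v k)
    rw [hv2 i, hv2 k, inner_smul_left, inner_smul_right] at h1
    rw [Complex.conj_ofReal] at h1
    have : ((lam i : ℂ) - lam k) * inner ℂ (v i) (v k) = 0 := by ring_nf; linear_combination h1
    rcases mul_eq_zero.mp this with h | h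
    · exact absurd (sub_eq_zero.mp h) hne
    · exact h
  -- build subspace
  set M : ℕ := (j : ℕ)
  have hjle : M + 1 ≤ N + 1 := Nat.succ_le_succ (Nat.lt_succ_iff.mp j.isLt)
  set emb : Fin (M + 1) → Fin (N + 1) := fun i => ⟨i, lt_of_lt_of_le i.isLt hjle⟩ with hemb
  have hembinj : Function.Injective emb := by
    intro a b hab
    have h := congrArg Fin.val hab
    simp only [hemb] at h
    exact Fin.ext h
  set b : Fin (M + 1) → H := fun i => v (emb i) with hbdef
  have hon : Orthonormal ℂ b := by
    rw [orthonormal_iff_ite]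
    intro i k
    by_cases h : i = k
    · subst h
      simp only [if_pos rfl]
      have := inner_self_eq_norm_sq (𝕜 := ℂ) (b i)
      rw [hbdef] at this ⊢
      have hc := inner_self_ofReal_re (𝕜 := ℂ) (v (emb i))
      rw [← @inner_self_ofReal_re ℂ]
      rw [this]
      simp [hv1]
    · rw [if_neg h]
      exact hovv _ _ (fun hc => h (hembinj hc))
  set V : Submodule ℂ H := Submodule.span ℂ (Set.range b) with hV
  have hrank : Module.finrank ℂ V = M + 1 := by
    rw [hV, finrank_span_eq_card hon.linearIndependent]
    simp
  have hbound : ∀ u ∈ V, (inner ℂ (T u) u : ℂ).re ≤ (μ j + ε) * ‖u‖ ^ 2 := by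
    intro u hu
    rw [hV] at hu
    obtain ⟨c, hc⟩ := (Submodule.mem_span_range_iff_exists_fun ℂ).mp hu
    have hTu : T u = ∑ i, ((lam (emb i) : ℂ) * c i) • b i := by
      rw [← hc, map_sum]
      refine Finset.sum_congr rfl fun i _ => ?_
      rw [map_smul]
      show c i • T (v (emb i)) = _
      rw [hv2 (emb i), smul_smul, mul_comm]
    have hinner : (inner ℂ (T u) u : ℂ) =
        ∑ i, ((lam (emb i) * Complex.normSq (c i) : ℝ) : ℂ) := by
      conv_lhs => rw [hTu, ← hc]
      rw [hon.inner_sum]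
      refine Finset.sum_congr rfl fun i _ => ?_
      rw [map_mul, Complex.conj_ofReal]
      push_cast
      rw [mul_assoc]
      congr 1
      rw [Complex.normSq_eq_conj_mul_self]
    have hnorm : (‖u‖ : ℝ) ^ 2 = ∑ i, Complex.normSq (c i) := by
      have h2 : (inner ℂ u u : ℂ) = ∑ i, ((Complex.normSq (c i) : ℝ) : ℂ) := by
        conv_lhs => rw [← hc]
        rw [hon.inner_sum]
        refine Finset.sum_congr rfl fun i _ => ?_
        rw [Complex.normSq_eq_conj_mul_self]
      have h3 := inner_self_eq_norm_sq (𝕜 := ℂ) u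
      rw [h2] at h3
      rw [← h3]
      push_cast
      simp
    rw [hinner, hnorm]
    have hre : (∑ i, ((lam (emb i) * Complex.normSq (c i) : ℝ) : ℂ)).re
        = ∑ i, lam (emb i) * Complex.normSq (c i) := by
      push_cast
      simp
    rw [hre, Finset.mul_sum]
    refine Finset.sum_le_sum fun i _ => ?_
    have h4 : lam (emb i) ≤ μ j + ε := by
      have h5 := (abs_le.mp (hlam (emb i))).2
      have h6 : emb i ≤ j := by
        rw [Fin.le_def]
        exact Nat.lt_succ_iff.mp i.isLt
      have h7 : μ (emb i) ≤ μ j := hmono h6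
      linarith
    exact mul_le_mul_of_nonneg_right h4 (Complex.normSq_nonneg _)
  -- conclude via csInf
  have hmem : (μ j + ε) ∈ {m : ℝ | ∃ V : Submodule ℂ H, Module.finrank ℂ V = (j : ℕ) + 1
      ∧ ∀ u ∈ V, (inner ℂ (T u) u : ℂ).re ≤ m * ‖u‖ ^ 2} := ⟨V, hrank, hbound⟩
  refine csInf_le ?_ hmem
  obtain ⟨c0, hc0⟩ := hbelow
  refine ⟨c0, ?_⟩
  rintro m ⟨W, hW, hWb⟩
  have hWne : W ≠ ⊥ := by
    intro h
    rw [h] at hW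
    simp [finrank_bot] at hW
  obtain ⟨x, hx, hx0⟩ := W.ne_bot_iff.mp hWne
  have h1 := hc0 x
  have h2 := hWb x hx
  have h3 : (0:ℝ) < ‖x‖ ^ 2 := by
    have := norm_pos_iff.mpr hx0
    positivity
  nlinarith
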